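/- For a finite group G and integer n ≥ 2, the set V = {(n, a, k) : a ∈ G, 1 ≤ k ≤ n − 1} is a prime subset of the Brandt semigroup B(G, n), and its cardinality is (n − 1)·|G|. -/

import Mathlib

/-- A nonempty subset `U` of a (multiplicative) semigroup is *prime* if
`a * b ∈ U` implies `a ∈ U` or `b ∈ U`. -/
def IsPrimeSubset {Γ : Type*} [Mul Γ] (U : Set Γ) : Prop :=
  U.Nonempty ∧ ∀ a b : Γ, a * b ∈ U → a ∈ U ∨ b ∈ U

/-- The Brandt semigroup `B(G, n)` over a group `G`: underlying set
`([n] × G × [n]) ∪ {0}`, encoded as `Option (Fin n × G × Fin n)` with `none`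
playing the role of the zero element `0`. -/
def Brandt (G : Type*) (n : ℕ) : Type _ := Option (Fin n × G × Fin n)

namespace Brandt

/-- The zero element `0` of the Brandt semigroup. -/
def zero {G : Type*} {n : ℕ} : Brandt G n := none

/-- The element `(i, a, j)` of the Brandt semigroup. -/
def elem {G : Type*} {n : ℕ} (i : Fin n) (a : G) (j : Fin n) : Brandt G n := some (i, a, j)

/-- Multiplication: `(i, a, j)(k, b, l) = (i, ab, l)` if `j = k` and `0` otherwise,
with `0` acting as a zero element. -/
def mul {G : Type*} [Group G] {n : ℕ} : Brandt G n → Brandt G n → Brandt G n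
  | none, _ => none
  | some _, none => none
  | some (i, a, j), some (k, b, l) => if j = k then some (i, a * b, l) else none

instance (G : Type*) [Group G] (n : ℕ) : Semigroup (Brandt G n) where
  mul := mul
  mul_assoc x y z := by
    show mul (mul x y) z = mul x (mul y z)
    rcases x with _ | ⟨i, a, j⟩ <;> rcases y with _ | ⟨k, b, l⟩ <;> rcases z with _ | ⟨m, c, p⟩
    all_goals try exact rfl
    case some.some.none =>
      by_cases h1 : j = k <;> simp only [mul, h1, ↓reduceIte] <;> exact rfl
    case some.some.some =>
      by_cases h1 : j = k <;> by_cases h2 : l = m <;>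
        simp only [mul, h1, h2, ↓reduceIte, mul_assoc] <;> exact rfl

instance (G : Type*) [Fintype G] (n : ℕ) : Fintype (Brandt G n) :=
  inferInstanceAs (Fintype (Option (Fin n × G × Fin n)))

instance (G : Type*) [DecidableEq G] (n : ℕ) : DecidableEq (Brandt G n) :=
  inferInstanceAs (DecidableEq (Option (Fin n × G × Fin n)))

end Brandt

/-- For a finite group `G` and `n ≥ 2`, the set `V = {(n, a, k) : a ∈ G, 1 ≤ k ≤ n - 1}`
is a prime subset of the Brandt semigroup `B(G, n)` of cardinality `(n - 1)|G|`.
(`Fin n` is identified with `[n] = {1, …, n}` via `x ↦ (x : ℕ) + 1`; the first index `n`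
is the element `⟨n - 1, _⟩ : Fin n`, and `k ∈ [n - 1]` means `(k : ℕ) + 1 ≤ n - 1`.) -/
theorem brandt_zeta_set_isPrimeSubset {G : Type*} [Group G] [Fintype G]
    (n : ℕ) (hn : 2 ≤ n) :
    IsPrimeSubset {x : Brandt G n | ∃ (a : G) (k : Fin n),
        (k : ℕ) + 1 ≤ n - 1 ∧ x = Brandt.elem ⟨n - 1, by omega⟩ a k} ∧
    ({x : Brandt G n | ∃ (a : G) (k : Fin n),
        (k : ℕ) + 1 ≤ n - 1 ∧ x = Brandt.elem ⟨n - 1, by omega⟩ a k}).ncard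
      = (n - 1) * Fintype.card G := by
  have hlt : n - 1 < n := by omega
  constructor
  · constructor
    · exact ⟨Brandt.elem ⟨n-1, hlt⟩ 1 ⟨0, by omega⟩, 1, ⟨0, by omega⟩,
        by show 0 + 1 ≤ n - 1; omega, rfl⟩
    · rintro a b ⟨c, k, hk, hab⟩
      have hmul : a * b = Brandt.mul a b := rfl
      rcases a with _ | ⟨⟨i, hi⟩, x, ⟨j, hj⟩⟩ <;> rcases b with _ | ⟨⟨p, hp⟩, y, ⟨q, hq⟩⟩ <;>
        rw [hmul] at hab <;> simp only [Brandt.mul, Brandt.elem] at hab <;>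
        try (simp at hab; done)
      change ((if (⟨j, hj⟩ : Fin n) = ⟨p, hp⟩ then some (⟨i, hi⟩, x * y, ⟨q, hq⟩) else none) :
        Option (Fin n × G × Fin n)) = some (⟨n - 1, hlt⟩, c, k) at hab
      by_cases h : (⟨j, hj⟩ : Fin n) = ⟨p, hp⟩
      swap
      · rw [if_neg h] at hab; simp at hab
      rw [if_pos h] at hab
      injection hab with hab
      simp only [Prod.mk.injEq, Fin.mk.injEq] at hab
      obtain ⟨hi', -, hq'⟩ := hab
      by_cases hj' : j + 1 ≤ n - 1
      · left
        exact ⟨x, ⟨j, hj⟩, hj', by simp [Brandt.elem, hi']; rfl⟩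
      · right
        have hp' : p = n - 1 := by
          have : j = p := by simpa [Fin.mk.injEq] using h
          omega
        refine ⟨y, ⟨q, hq⟩, by omega, ?_⟩
        simp [Brandt.elem, hp', hq']; rfl
  · have hset : {x : Brandt G n | ∃ (a : G) (k : Fin n),
        (k : ℕ) + 1 ≤ n - 1 ∧ x = Brandt.elem ⟨n - 1, by omega⟩ a k} =
        Set.range (fun p : G × Fin (n-1) =>
          Brandt.elem (G := G) ⟨n - 1, hlt⟩ p.1 ⟨p.2, by omega⟩) := by
      ext x
      constructor
      · rintro ⟨a, k, hk, rfl⟩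
        exact ⟨(a, ⟨k, by omega⟩), rfl⟩
      · rintro ⟨⟨a, k⟩, rfl⟩
        exact ⟨a, ⟨k, by omega⟩, Nat.succ_le_of_lt (by simp), rfl⟩
    rw [hset]
    have hinj : Function.Injective (fun p : G × Fin (n-1) =>
        Brandt.elem (G := G) ⟨n - 1, hlt⟩ p.1 ⟨p.2, by omega⟩) := by
      intro p q h
      injection h with h
      simp only [Prod.mk.injEq, Fin.mk.injEq] at h
      exact Prod.ext h.2.1 (Fin.ext h.2.2)
    rw [← Nat.card_coe_set_eq, Nat.card_range_of_injective hinj]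
    simp [Nat.card_eq_fintype_card, mul_comm]
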